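/- Let L ⊆ F be subfields of ℂ with F/L a finite abelian Galois extension. Suppose x ∈ F is nonzero and satisfies |γ(x)/x| < 1 for every γ ∈ Gal(F/L) with γ ≠ id. Then there exists a positive integer m such that the conjugates {γ(x^m) : γ ∈ Gal(F/L)} form a normal basis of F over L. -/

import Mathlib

set_option synthInstance.maxHeartbeats 1000000
set_option maxHeartbeats 1000000

private lemma high_power_aux (L : Subfield ℂ) (F : IntermediateField L ℂ)
    [FiniteDimensional L F] [IsGalois L F] [DecidableEq (F ≃ₐ[L] F)] (y : F)
    (M : Matrix (F ≃ₐ[L] F) (F ≃ₐ[L] F) F)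
    (hM : M = Matrix.of (fun σ τ : F ≃ₐ[L] F => (σ * τ) y))
    (hdetM : M.det ≠ 0) :
    LinearIndependent L (fun σ : (F ≃ₐ[L] F) => σ y) := by
  rw [Fintype.linearIndependent_iff]
  intro g hg
  have h0 : M.mulVec (fun τ => algebraMap L F (g τ)) = 0 := by
    funext ρ
    have h1 : ρ (∑ σ : (F ≃ₐ[L] F), g σ • σ y) = 0 := by rw [hg, map_zero]
    rw [map_sum] at h1
    have h2 : ∀ σ : (F ≃ₐ[L] F), ρ (g σ • σ y) = M ρ σ * algebraMap L F (g σ) := by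
      intro σ
      calc ρ (g σ • σ y) = ρ (algebraMap L F (g σ) * σ y) := by
              rw [Algebra.smul_def (g σ) (σ y)]
        _ = algebraMap L F (g σ) * ρ (σ y) := by rw [map_mul, AlgEquiv.commutes]
        _ = M ρ σ * algebraMap L F (g σ) := by
              rw [mul_comm]
              congr 1
              rw [hM]
              simp [AlgEquiv.mul_apply]
    rw [Finset.sum_congr rfl (fun σ _ => h2 σ)] at h1
    simpa [Matrix.mulVec, dotProduct] using h1
  have hv := Matrix.eq_zero_of_mulVec_eq_zero hdetM h0
  intro i
  have := congrFun hv i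
  exact (algebraMap L F).injective (by simpa using this)

/-- Let `L ⊆ F` be subfields of `ℂ` with `F/L` a finite abelian Galois extension. If `x ∈ F` is
nonzero and `|γ(x)/x| < 1` for every `γ ≠ id` in `Gal(F/L)`, then the conjugates of some power
`x^m` (with `m ≥ 1`) form a normal basis of `F` over `L`. -/
theorem high_power_normal_basis (L : Subfield ℂ) (F : IntermediateField L ℂ)
    [FiniteDimensional L F] [IsGalois L F]
    (hab : ∀ σ τ : F ≃ₐ[L] F, σ * τ = τ * σ)
    (x : F) (hx : x ≠ 0)
    (hlt : ∀ γ : F ≃ₐ[L] F, γ ≠ 1 → ‖((γ x : ℂ) / (x : ℂ))‖ < 1) :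
    ∃ m : ℕ, 0 < m ∧
      (LinearIndependent L (fun σ : F ≃ₐ[L] F => σ (x ^ m)) ∧
        Submodule.span L (Set.range fun σ : F ≃ₐ[L] F => σ (x ^ m)) = ⊤) := by
  letI : DecidableEq (F ≃ₐ[L] F) := Classical.decEq _
  have hxC : (x : ℂ) ≠ 0 := by exact_mod_cast hx
  have hx0 : (0:ℝ) < ‖(x : ℂ)‖ := norm_pos_iff.mpr hxC
  -- the maximal ratio r < 1
  have hne : (Finset.univ : Finset (F ≃ₐ[L] F)).Nonempty := Finset.univ_nonempty
  set f : (F ≃ₐ[L] F) → ℝ := fun γ => if γ = 1 then 0 else ‖((γ x : ℂ) / (x : ℂ))‖ with hf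
  set r : ℝ := Finset.univ.sup' hne f with hrdef
  have hr0 : (0:ℝ) ≤ r :=
    le_trans (le_of_eq (by simp [hf])) (Finset.le_sup' f (Finset.mem_univ (1 : (F ≃ₐ[L] F))))
  have hr1 : r < 1 := by
    rw [hrdef, Finset.sup'_lt_iff]
    intro γ _
    by_cases h : γ = 1
    · simp [hf, h]
    · simpa [hf, h] using hlt γ h
  have hbound : ∀ γ : (F ≃ₐ[L] F), γ ≠ 1 → ‖((γ x : ℂ))‖ ≤ r * ‖(x:ℂ)‖ := by
    intro γ hγ
    have h1 : ‖((γ x : ℂ)/(x:ℂ))‖ ≤ r :=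
      le_trans (le_of_eq (by simp [hf, hγ])) (Finset.le_sup' f (Finset.mem_univ γ))
    rw [norm_div] at h1
    exact (div_le_iff₀ hx0).mp h1
  have hball : ∀ γ : (F ≃ₐ[L] F), ‖((γ x : ℂ))‖ ≤ ‖(x:ℂ)‖ := by
    intro γ
    by_cases h : γ = 1
    · simp [h, AlgEquiv.one_apply]
    · exact (hbound γ h).trans (by nlinarith)
  -- choose m
  set n := Fintype.card (F ≃ₐ[L] F) with hn
  have hn1 : 1 ≤ n := Fintype.card_pos
  have hfacpos : (0:ℝ) < (n.factorial : ℝ) := by exact_mod_cast n.factorial_pos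
  obtain ⟨m, hm⟩ : ∃ m : ℕ, r ^ m < ((n.factorial : ℝ))⁻¹ :=
    exists_pow_lt_of_lt_one (by positivity) hr1
  have hmpos : 0 < m := by
    rcases Nat.eq_zero_or_pos m with h | h
    · exfalso
      rw [h, pow_zero] at hm
      have h2 : ((n.factorial:ℝ))⁻¹ ≤ 1 := inv_le_one_of_one_le₀ (by exact_mod_cast n.factorial_pos)
      linarith
    · exact h
  have hfac : (n.factorial : ℝ) * r ^ m < 1 := by
    calc (n.factorial : ℝ) * r ^ m < (n.factorial : ℝ) * ((n.factorial : ℝ))⁻¹ :=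
          mul_lt_mul_of_pos_left hm hfacpos
      _ = 1 := mul_inv_cancel₀ (ne_of_gt hfacpos)
  refine ⟨m, hmpos, ?_⟩
  set y : F := x ^ m with hy
  set B : ℝ := ‖(x:ℂ)‖ ^ m with hB
  have hB0 : (0:ℝ) < B := by positivity
  set M : Matrix (F ≃ₐ[L] F) (F ≃ₐ[L] F) F := Matrix.of (fun σ τ : (F ≃ₐ[L] F) => (σ * τ) y) with hM
  set N : Matrix (F ≃ₐ[L] F) (F ≃ₐ[L] F) ℂ := M.map (algebraMap F ℂ) with hN
  have hNentry : ∀ ρ σ : (F ≃ₐ[L] F), N ρ σ = (((ρ * σ) y : F) : ℂ) := fun ρ σ => rfl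
  have habsN : ∀ ρ σ : (F ≃ₐ[L] F), ‖(N ρ σ)‖ = ‖(((ρ * σ) x : F) : ℂ)‖ ^ m := by
    intro ρ σ
    rw [hNentry, hy, map_pow]
    push_cast
    rw [norm_pow]
  -- the special permutation
  set π₀ : Equiv.Perm (F ≃ₐ[L] F) := Equiv.inv (F ≃ₐ[L] F) with hπ₀
  set T : Equiv.Perm (F ≃ₐ[L] F) → ℂ := fun π => ∏ i : (F ≃ₐ[L] F), N (π i) i with hT
  have hT0 : T π₀ = ((x:ℂ)^m)^n := by
    rw [hT]
    have key : ∀ i : (F ≃ₐ[L] F), N (π₀ i) i = (x:ℂ)^m := by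
      intro i
      rw [hπ₀]
      simp only [Equiv.inv_apply]
      rw [hNentry, inv_mul_cancel, hy]
      rw [AlgEquiv.one_apply]
      push_cast
      ring
    simp only
    rw [Finset.prod_congr rfl (fun i _ => key i), Finset.prod_const]
    simp [hn]
  have hTabs : ∀ π : Equiv.Perm (F ≃ₐ[L] F), π ≠ π₀ → ‖(T π)‖ ≤ r ^ m * B ^ n := by
    intro π hπ
    obtain ⟨σ₀, hσ₀⟩ : ∃ σ₀ : (F ≃ₐ[L] F), π σ₀ * σ₀ ≠ 1 := by
      have hcc : ¬ ∀ σ : F ≃ₐ[L] F, π σ * σ = 1 := by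
        intro hcon
        refine hπ (Equiv.ext fun σ => ?_)
        rw [hπ₀]
        simp only [Equiv.inv_apply]
        exact eq_inv_of_mul_eq_one_left (hcon σ)
      exact not_forall.mp hcc
    rw [hT]
    simp only
    rw [norm_prod]
    rw [← Finset.mul_prod_erase Finset.univ (fun i => ‖(N (π i) i)‖) (Finset.mem_univ σ₀)]
    have h1 : ‖(N (π σ₀) σ₀)‖ ≤ r ^ m * B := by
      rw [habsN, hB, ← mul_pow]
      exact pow_le_pow_left₀ (norm_nonneg _) (hbound _ hσ₀) m
    have h2 : ∏ i ∈ Finset.univ.erase σ₀, ‖(N (π i) i)‖ ≤ B ^ (n - 1) := by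
      calc ∏ i ∈ Finset.univ.erase σ₀, ‖(N (π i) i)‖
          ≤ ∏ _i ∈ Finset.univ.erase σ₀, B := by
            apply Finset.prod_le_prod
            · intro i _; positivity
            · intro i _
              rw [habsN, hB]
              exact pow_le_pow_left₀ (norm_nonneg _) (hball _) m
        _ = B ^ (n - 1) := by
            rw [Finset.prod_const, Finset.card_erase_of_mem (Finset.mem_univ σ₀)]
            simp [hn]
    calc ‖(N (π σ₀) σ₀)‖ * ∏ i ∈ Finset.univ.erase σ₀, ‖(N (π i) i)‖
        ≤ (r ^ m * B) * B ^ (n - 1) := by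
          apply mul_le_mul h1 h2 (Finset.prod_nonneg (fun i _ => norm_nonneg _))
          positivity
      _ = r ^ m * B ^ n := by
          rw [mul_assoc, ← pow_succ']
          congr 2
          omega
  -- determinant is nonzero
  have hdetN : N.det ≠ 0 := by
    intro hdet
    rw [Matrix.det_apply'] at hdet
    have hsign : ∀ π : Equiv.Perm (F ≃ₐ[L] F), ‖((Equiv.Perm.sign π : ℤ) : ℂ)‖ = 1 := by
      intro π
      rcases Int.units_eq_one_or (Equiv.Perm.sign π) with h | h <;> simp [h]
    rw [← Finset.add_sum_erase Finset.univ _ (Finset.mem_univ π₀)] at hdet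
    have heq : ((Equiv.Perm.sign π₀ : ℤ) : ℂ) * T π₀
        = - ∑ π ∈ Finset.univ.erase π₀, ((Equiv.Perm.sign π : ℤ) : ℂ) * T π := by
      linear_combination hdet
    have hlhs : ‖(((Equiv.Perm.sign π₀ : ℤ) : ℂ) * T π₀)‖ = B ^ n := by
      rw [norm_mul, hsign, one_mul, hT0, hB, norm_pow, norm_pow]
    have hrhs : ‖(- ∑ π ∈ Finset.univ.erase π₀, ((Equiv.Perm.sign π : ℤ) : ℂ) * T π)‖
        ≤ (n.factorial : ℝ) * (r ^ m * B ^ n) := by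
      rw [norm_neg]
      calc ‖(∑ π ∈ Finset.univ.erase π₀, ((Equiv.Perm.sign π : ℤ) : ℂ) * T π)‖
          ≤ ∑ π ∈ Finset.univ.erase π₀, ‖(((Equiv.Perm.sign π : ℤ) : ℂ) * T π)‖ :=
            norm_sum_le _ _
        _ ≤ ∑ _π ∈ Finset.univ.erase π₀, (r ^ m * B ^ n) := by
            apply Finset.sum_le_sum
            intro π hmem
            rw [norm_mul, hsign, one_mul]
            exact hTabs π (Finset.ne_of_mem_erase hmem)
        _ = ((Finset.univ.erase π₀).card : ℝ) * (r ^ m * B ^ n) := by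
            rw [Finset.sum_const, nsmul_eq_mul]
        _ ≤ (n.factorial : ℝ) * (r ^ m * B ^ n) := by
            apply mul_le_mul_of_nonneg_right _ (by positivity)
            have hcard : (Finset.univ.erase π₀).card ≤ Fintype.card (Equiv.Perm (F ≃ₐ[L] F)) := by
              rw [← Finset.card_univ]
              exact Finset.card_le_card (Finset.erase_subset _ _)
            rw [Fintype.card_perm] at hcard
            exact_mod_cast hcard
    have hcontra : B ^ n ≤ (n.factorial : ℝ) * (r ^ m * B ^ n) := by
      calc B ^ n = ‖(((Equiv.Perm.sign π₀ : ℤ) : ℂ) * T π₀)‖ := hlhs.symm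
        _ = ‖(- ∑ π ∈ Finset.univ.erase π₀, ((Equiv.Perm.sign π : ℤ) : ℂ) * T π)‖ := by
            rw [heq]
        _ ≤ (n.factorial : ℝ) * (r ^ m * B ^ n) := hrhs
    nlinarith [pow_pos hB0 n]
  have hdetM : M.det ≠ 0 := by
    intro h
    apply hdetN
    rw [hN, ← RingHom.mapMatrix_apply, ← RingHom.map_det, h, map_zero]
  -- linear independence
  have hli : LinearIndependent L (fun σ : (F ≃ₐ[L] F) => σ y) :=
    high_power_aux L F y M hM hdetM
  refine ⟨hli, ?_⟩
  apply hli.span_eq_top_of_card_eq_finrank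
  rw [← Nat.card_eq_fintype_card, IsGalois.card_aut_eq_finrank]
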